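/- Let ((c̄,b̄),x̄) be in the graph of the argmin mapping S and let D ∈ M_{c̄,b̄}(x̄). Then S_D(c̄, b̄_D) = {x̄} if and only if the matrix M_D is nonsingular. -/

import Mathlib

open Matrix Set Topology Filter
open scoped ENNReal

namespace QPLip

variable {n m : ℕ}

/-- The quadratic objective function `(1/2) xᵀQx + cᵀx`. -/
noncomputable def obj (Q : Matrix (Fin n) (Fin n) ℝ) (c x : Fin n → ℝ) : ℝ :=
  (1 / 2) * (x ⬝ᵥ Q.mulVec x) + c ⬝ᵥ x

/-- The feasible set `F(b) = {x : aᵢ'x ≤ bᵢ, i = 1,…,m}`. -/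
def Feas (A : Matrix (Fin m) (Fin n) ℝ) (b : Fin m → ℝ) : Set (Fin n → ℝ) :=
  {x | ∀ i, A i ⬝ᵥ x ≤ b i}

/-- The argmin (optimal set) mapping `S(c,b)`. -/
noncomputable def argminSet (Q : Matrix (Fin n) (Fin n) ℝ) (A : Matrix (Fin m) (Fin n) ℝ)
    (c : Fin n → ℝ) (b : Fin m → ℝ) : Set (Fin n → ℝ) :=
  {x | x ∈ Feas A b ∧ ∀ y ∈ Feas A b, obj Q c x ≤ obj Q c y}

/-- The active index set `I_b(x)`. -/
def activeIdx (A : Matrix (Fin m) (Fin n) ℝ) (b : Fin m → ℝ) (x : Fin n → ℝ) : Set (Fin m) :=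
  {i | A i ⬝ᵥ x = b i}

/-- Conical convex hull of `{aᵢ : i ∈ D}` (equal to `{0}` when `D = ∅`). -/
def coneOf (A : Matrix (Fin m) (Fin n) ℝ) (D : Finset (Fin m)) : Set (Fin n → ℝ) :=
  {v | ∃ lam : Fin m → ℝ, (∀ i, 0 ≤ lam i) ∧ v = ∑ i ∈ D, lam i • A i}

/-- The family `M_{c,b}(x)` of minimal KKT sets of indices at `((c,b),x)`. -/
def MinKKT (Q : Matrix (Fin n) (Fin n) ℝ) (A : Matrix (Fin m) (Fin n) ℝ)
    (c : Fin n → ℝ) (b : Fin m → ℝ) (x : Fin n → ℝ) : Set (Finset (Fin m)) :=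
  {D | ↑D ⊆ activeIdx A b x ∧ -(Q.mulVec x + c) ∈ coneOf A D ∧
    ∀ D' : Finset (Fin m), D' ⊂ D → -(Q.mulVec x + c) ∉ coneOf A D'}

/-- The extended family `L_{c,b}(x)` of KKT subsets of indices. -/
def ExtKKT (Q : Matrix (Fin n) (Fin n) ℝ) (A : Matrix (Fin m) (Fin n) ℝ)
    (c : Fin n → ℝ) (b : Fin m → ℝ) (x : Fin n → ℝ) : Set (Finset (Fin m)) :=
  {D | ↑D ⊆ activeIdx A b x ∧ LinearIndependent ℝ (fun i : D => A i.1) ∧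
    -(Q.mulVec x + c) ∈ coneOf A D}

/-- Slater constraint qualification at `b`. -/
def Slater (A : Matrix (Fin m) (Fin n) ℝ) (b : Fin m → ℝ) : Prop :=
  ∃ y : Fin n → ℝ, ∀ i, A i ⬝ᵥ y < b i

/-- The Nürnberger condition at `((c,b),x)`. -/
def NCond (Q : Matrix (Fin n) (Fin n) ℝ) (A : Matrix (Fin m) (Fin n) ℝ)
    (c : Fin n → ℝ) (b : Fin m → ℝ) (x : Fin n → ℝ) : Prop :=
  Slater A b ∧ ∀ D : Finset (Fin m), ↑D ⊆ activeIdx A b x →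
    -(Q.mulVec x + c) ∈ coneOf A D → n ≤ D.card

/-- The submatrix `A_D` of `A` formed by the rows indexed by `D`. -/
def subA (A : Matrix (Fin m) (Fin n) ℝ) (D : Finset (Fin m)) : Matrix D (Fin n) ℝ :=
  Matrix.of fun i j => A i.1 j

/-- The KKT matrix `M_D = [[Q, A_Dᵀ],[A_D, 0]]`. -/
noncomputable def MD (Q : Matrix (Fin n) (Fin n) ℝ) (A : Matrix (Fin m) (Fin n) ℝ)
    (D : Finset (Fin m)) : Matrix (Fin n ⊕ D) (Fin n ⊕ D) ℝ :=
  Matrix.fromBlocks Q (subA A D)ᵀ (subA A D) 0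

/-- The feasible set of the subproblem `P_D`. -/
def FeasD (A : Matrix (Fin m) (Fin n) ℝ) (D : Finset (Fin m)) (β : D → ℝ) :
    Set (Fin n → ℝ) :=
  {x | ∀ i : D, A i.1 ⬝ᵥ x ≤ β i}

/-- The optimal set mapping `S_D(c,β)` of the subproblem `P_D(c,β)`. -/
noncomputable def argminD (Q : Matrix (Fin n) (Fin n) ℝ) (A : Matrix (Fin m) (Fin n) ℝ)
    (D : Finset (Fin m)) (c : Fin n → ℝ) (β : D → ℝ) : Set (Fin n → ℝ) :=
  {x | x ∈ FeasD A D β ∧ ∀ y ∈ FeasD A D β, obj Q c x ≤ obj Q c y}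

/-- Restriction `b_D` of the right-hand side `b` to the indices in `D`. -/
def restr (b : Fin m → ℝ) (D : Finset (Fin m)) : D → ℝ := fun i => b i.1

/-- `nrm` is a norm on `ℝⁿ`. -/
structure IsNorm (nrm : (Fin n → ℝ) → ℝ) : Prop where
  definite : ∀ x, nrm x = 0 → x = 0
  smul : ∀ (t : ℝ) (x : Fin n → ℝ), nrm (t • x) = |t| * nrm x
  triangle : ∀ x y, nrm (x + y) ≤ nrm x + nrm y

/-- The dual norm `‖c‖_* = sup {|c'y| : ‖y‖ ≤ 1}`. -/
noncomputable def dualNrm (nrm : (Fin n → ℝ) → ℝ) (c : Fin n → ℝ) : ℝ :=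
  sSup {r | ∃ y, nrm y ≤ 1 ∧ r = |c ⬝ᵥ y|}

/-- Distance (with respect to the norm `nrm`) from a point to a set, with `d(x,∅) = +∞`. -/
noncomputable def dSet (nrm : (Fin n → ℝ) → ℝ) (x : Fin n → ℝ) (S : Set (Fin n → ℝ)) :
    ℝ≥0∞ :=
  ⨅ s ∈ S, ENNReal.ofReal (nrm (x - s))

/-- The distance `max {‖c₁-c₂‖_*, ‖β₁-β₂‖_∞}` in a parameter space `ℝⁿ × ℝ^ι`. -/
noncomputable def pDist (nrm : (Fin n → ℝ) → ℝ) {ι : Type} [Fintype ι]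
    (p q : (Fin n → ℝ) × (ι → ℝ)) : ℝ :=
  max (dualNrm nrm (p.1 - q.1)) ‖p.2 - q.2‖

/-- The Aubin property of a set-valued mapping `G` at `(pbar, xbar)`, where the parameter
space carries the distance `pd` and `ℝⁿ` the norm `nrm`. -/
def AubinAt {P : Type*} [TopologicalSpace P] (nrm : (Fin n → ℝ) → ℝ) (pd : P → P → ℝ)
    (G : P → Set (Fin n → ℝ)) (pbar : P) (xbar : Fin n → ℝ) : Prop :=
  ∃ κ : ℝ, 0 ≤ κ ∧ ∃ V ∈ 𝓝 pbar, ∃ U ∈ 𝓝 xbar,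
    ∀ p1 ∈ V, ∀ p2 ∈ V, ∀ x2 ∈ G p2 ∩ U,
      dSet nrm x2 (G p1) ≤ ENNReal.ofReal (κ * pd p2 p1)

/-- The Lipschitz modulus of `G` at `(pbar, xbar)`: the infimum in `[0,+∞]` of all Lipschitz
constants `κ` in the definition of the Aubin property (`+∞` if the Aubin property fails). -/
noncomputable def lipMod {P : Type*} [TopologicalSpace P] (nrm : (Fin n → ℝ) → ℝ)
    (pd : P → P → ℝ) (G : P → Set (Fin n → ℝ)) (pbar : P) (xbar : Fin n → ℝ) : ℝ≥0∞ :=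
  ⨅ κ ∈ {κ : ℝ | 0 ≤ κ ∧ ∃ V ∈ 𝓝 pbar, ∃ U ∈ 𝓝 xbar,
    ∀ p1 ∈ V, ∀ p2 ∈ V, ∀ x2 ∈ G p2 ∩ U,
      dSet nrm x2 (G p1) ≤ ENNReal.ofReal (κ * pd p2 p1)}, ENNReal.ofReal κ

/-- Strong Lipschitz stability of `G` at `pbar`: single-valuedness in a neighborhood of
`pbar` together with Lipschitz continuity there. -/
def StrongLipStable {P : Type*} [TopologicalSpace P] (nrm : (Fin n → ℝ) → ℝ)
    (pd : P → P → ℝ) (G : P → Set (Fin n → ℝ)) (pbar : P) : Prop :=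
  ∃ V ∈ 𝓝 pbar, (∀ p ∈ V, ∃! x, x ∈ G p) ∧
    ∃ κ : ℝ, 0 ≤ κ ∧ ∀ p1 ∈ V, ∀ p2 ∈ V, ∀ x1 ∈ G p1, ∀ x2 ∈ G p2,
      nrm (x1 - x2) ≤ κ * pd p1 p2

/-- The matrix `(I_n | 0_{n×|D|})`. -/
noncomputable def projMat (n : ℕ) {m : ℕ} (D : Finset (Fin m)) :
    Matrix (Fin n) (Fin n ⊕ D) ℝ :=
  Matrix.fromCols 1 0

/-- Operator norm of a matrix from `(ℝ^ι, ‖·‖_∞)` to `(ℝⁿ, nrm)`. -/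
noncomputable def opNormInf (nrm : (Fin n → ℝ) → ℝ) {ι : Type} [Fintype ι]
    (B : Matrix (Fin n) ι ℝ) : ℝ :=
  sSup {r | ∃ v : ι → ℝ, ‖v‖ ≤ 1 ∧ r = nrm (B.mulVec v)}

/-- Operator norm of a matrix from `(ℝⁿ × ℝ^ι, max {‖·‖_*, ‖·‖_∞})` to `(ℝⁿ, nrm)`. -/
noncomputable def opNormMixed (nrm : (Fin n → ℝ) → ℝ) {ι : Type} [Fintype ι]
    (B : Matrix (Fin n) (Fin n ⊕ ι) ℝ) : ℝ :=
  sSup {r | ∃ (α : Fin n → ℝ) (β : ι → ℝ), dualNrm nrm α ≤ 1 ∧ ‖β‖ ≤ 1 ∧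
    r = nrm (B.mulVec (Sum.elim α β))}


/-- The matrix `A_Dᵀ (A_D A_Dᵀ)⁻¹`, which is the two-sided inverse of `A_D` whenever
`A_D` is square and invertible. -/
noncomputable def pinvA (A : Matrix (Fin m) (Fin n) ℝ) (D : Finset (Fin m)) :
    Matrix (Fin n) D ℝ :=
  (subA A D)ᵀ * ((subA A D) * (subA A D)ᵀ)⁻¹

end QPLip

open QPLip


section Aux

variable {n m : ℕ}

lemma sum_dotProduct' {ι : Type*} (s : Finset ι) (f : ι → Fin n → ℝ) (u : Fin n → ℝ) :
    (∑ i ∈ s, f i) ⬝ᵥ u = ∑ i ∈ s, f i ⬝ᵥ u := by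
  simp only [dotProduct, Finset.sum_apply, Finset.sum_mul]
  exact Finset.sum_comm

lemma dot_mulVec_symm {Q : Matrix (Fin n) (Fin n) ℝ} (hQ : Q.PosSemidef)
    (x y : Fin n → ℝ) : x ⬝ᵥ Q *ᵥ y = y ⬝ᵥ Q *ᵥ x := by
  have hsymm : Qᵀ = Q := by
    rw [← Matrix.conjTranspose_eq_transpose_of_trivial]; exact hQ.1
  rw [dotProduct_mulVec, ← hsymm, vecMul_transpose, dotProduct_comm, hsymm]

lemma obj_add {Q : Matrix (Fin n) (Fin n) ℝ} (hQ : Q.PosSemidef)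
    (c x u : Fin n → ℝ) :
    obj Q c (x + u) = obj Q c x + (Q *ᵥ x + c) ⬝ᵥ u + (1/2) * (u ⬝ᵥ Q *ᵥ u) := by
  have h := dot_mulVec_symm hQ x u
  simp only [obj, mulVec_add, dotProduct_add, add_dotProduct]
  rw [dotProduct_comm (Q *ᵥ x) u, h]
  ring

lemma quad_nonneg {Q : Matrix (Fin n) (Fin n) ℝ} (hQ : Q.PosSemidef)
    (u : Fin n → ℝ) : 0 ≤ u ⬝ᵥ Q *ᵥ u := by
  simpa using hQ.dotProduct_mulVec_nonneg u

end Aux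

/-- for `((c̄,b̄),x̄) ∈ gph S` and `D ∈ M_{c̄,b̄}(x̄)`, one has
`S_D(c̄, b̄_D) = {x̄}` iff the matrix `M_D` is nonsingular. -/
theorem statement3 {n m : ℕ} (hn : 0 < n) (hm : 0 < m)
    (Q : Matrix (Fin n) (Fin n) ℝ) (hQ : Q.PosSemidef)
    (A : Matrix (Fin m) (Fin n) ℝ) (cb : Fin n → ℝ) (bb : Fin m → ℝ) (xb : Fin n → ℝ)
    (hx : xb ∈ argminSet Q A cb bb) (D : Finset (Fin m)) (hD : D ∈ MinKKT Q A cb bb xb) :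
    argminD Q A D cb (restr bb D) = {xb} ↔ IsUnit (MD Q A D) := by
  obtain ⟨hfeas, hopt⟩ := hx
  obtain ⟨hact, ⟨lam, hlam0, hrep⟩, hmin⟩ := hD
  have hactD : ∀ i ∈ D, A i ⬝ᵥ xb = bb i := fun i hi => hact (Finset.mem_coe.mpr hi)
  -- positivity of the multipliers, from minimality
  have hlam_pos : ∀ i ∈ D, 0 < lam i := by
    intro i hi
    rcases (hlam0 i).lt_or_eq with h | h
    · exact h
    · exfalso
      apply hmin (D.erase i) (Finset.erase_ssubset hi)
      refine ⟨lam, hlam0, ?_⟩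
      rw [hrep, ← Finset.sum_erase_add D _ hi, ← h, zero_smul, add_zero]
  -- linear independence of the rows indexed by D, from minimality
  have key : ∀ w : Fin m → ℝ, (∑ i ∈ D, w i • A i = 0) → ∀ i ∈ D, ¬ w i < 0 := by
    intro w hw i0 hi0 hneg
    set s : Finset (Fin m) := D.filter (fun i => w i < 0) with hs
    have hsne : s.Nonempty := ⟨i0, Finset.mem_filter.mpr ⟨hi0, hneg⟩⟩
    obtain ⟨j, hjs, hjmin⟩ := s.exists_min_image (fun i => lam i / (-w i)) hsne
    obtain ⟨hjD, hwj⟩ := Finset.mem_filter.mp hjs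
    set t := lam j / (-w j) with htdef
    have hwj' : 0 < -w j := neg_pos.mpr hwj
    have ht : 0 < t := div_pos (hlam_pos j hjD) hwj'
    have hcoeff : ∀ i ∈ D, 0 ≤ lam i + t * w i := by
      intro i hi
      rcases lt_or_ge (w i) 0 with hwi | hwi
      · have his : i ∈ s := Finset.mem_filter.mpr ⟨hi, hwi⟩
        have h1 := hjmin i his
        have h2 : t * (-w i) ≤ lam i := by
          rw [← le_div_iff₀ (neg_pos.mpr hwi)]
          exact h1
        linarith
      · nlinarith [hlam_pos i hi, mul_nonneg ht.le hwi]
    have hj0 : lam j + t * w j = 0 := by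
      have : t * (-w j) = lam j := div_mul_cancel₀ _ hwj'.ne'
      linarith
    apply hmin (D.erase j) (Finset.erase_ssubset hjD)
    refine ⟨fun i => if i ∈ D then lam i + t * w i else 0, ?_, ?_⟩
    · intro i
      by_cases hi : i ∈ D
      · simpa [hi] using hcoeff i hi
      · simp [hi]
    · rw [hrep]
      have h1 : ∑ i ∈ D.erase j, (if i ∈ D then lam i + t * w i else 0) • A i
          = ∑ i ∈ D.erase j, (lam i + t * w i) • A i :=
        Finset.sum_congr rfl fun i hi => by
          rw [if_pos (Finset.mem_of_mem_erase hi)]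
      rw [h1]
      have h2 : ∑ i ∈ D, (lam i + t * w i) • A i
          = ∑ i ∈ D.erase j, (lam i + t * w i) • A i := by
        rw [← Finset.sum_erase_add D _ hjD, hj0, zero_smul, add_zero]
      rw [← h2]
      have h3 : ∑ i ∈ D, (lam i + t * w i) • A i
          = ∑ i ∈ D, lam i • A i + t • ∑ i ∈ D, w i • A i := by
        rw [Finset.smul_sum, ← Finset.sum_add_distrib]
        exact Finset.sum_congr rfl fun i _ => by rw [smul_smul, add_smul]
      rw [h3, hw, smul_zero, add_zero]
  have hindep : ∀ w : Fin m → ℝ, (∑ i ∈ D, w i • A i = 0) → ∀ i ∈ D, w i = 0 := by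
    intro w hw i hi
    have h1 := key w hw i hi
    have h2 := key (fun i => -w i) (by simp only [neg_smul, Finset.sum_neg_distrib, hw, neg_zero]) i hi
    simp only [neg_lt_zero, not_lt] at h1 h2
    linarith
  -- dot product of the gradient with a direction
  have hgdot : ∀ u : Fin n → ℝ,
      (Q *ᵥ xb + cb) ⬝ᵥ u = -∑ i ∈ D, lam i * (A i ⬝ᵥ u) := by
    intro u
    have h : (∑ i ∈ D, lam i • A i) ⬝ᵥ u = ∑ i ∈ D, lam i * (A i ⬝ᵥ u) := by
      rw [sum_dotProduct']
      exact Finset.sum_congr rfl fun i _ => by rw [smul_dotProduct]; rfl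
    rw [← hrep, neg_dotProduct] at h
    linarith
  -- xb belongs to the argmin of the subproblem
  have hxD : xb ∈ argminD Q A D cb (restr bb D) := by
    constructor
    · intro i
      exact le_of_eq (hactD i.1 i.2)
    · intro y hy
      have hexp := obj_add hQ cb xb (y - xb)
      rw [add_sub_cancel] at hexp
      have hsum : ∀ i ∈ D, A i ⬝ᵥ (y - xb) ≤ 0 := by
        intro i hi
        have h1 := hy ⟨i, hi⟩
        have h2 := hactD i hi
        rw [dotProduct_sub]
        simp only [restr] at h1
        linarith
      have hge : 0 ≤ (Q *ᵥ xb + cb) ⬝ᵥ (y - xb) := by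
        rw [hgdot]
        have : ∑ i ∈ D, lam i * (A i ⬝ᵥ (y - xb)) ≤ 0 :=
          Finset.sum_nonpos fun i hi =>
            mul_nonpos_of_nonneg_of_nonpos (hlam0 i) (hsum i hi)
        linarith
      rw [hexp]
      have hq := quad_nonneg hQ (y - xb)
      linarith
  constructor
  · -- singleton → nonsingular
    intro hsing
    rw [← Matrix.mulVec_injective_iff_isUnit]
    have hker : ∀ z : Fin n ⊕ D → ℝ, (MD Q A D) *ᵥ z = 0 → z = 0 := by
      intro z hz
      set u : Fin n → ℝ := z ∘ Sum.inl with hu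
      set w : D → ℝ := z ∘ Sum.inr with hw
      have hzz : Sum.elim u w = z := funext fun i => by cases i <;> rfl
      rw [← hzz, MD, fromBlocks_mulVec] at hz
      have htop : Q *ᵥ u + (subA A D)ᵀ *ᵥ w = 0 := by
        funext j
        have := congrFun hz (Sum.inl j)
        simpa using this
      have hbot : ∀ i : D, A i.1 ⬝ᵥ u = 0 := by
        intro i
        have := congrFun hz (Sum.inr i)
        simpa [Matrix.mulVec, subA] using this
      have hAu : (subA A D) *ᵥ u = 0 := funext fun i => hbot i
      have hquad0 : u ⬝ᵥ Q *ᵥ u = 0 := by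
        have h1 := congrArg (fun v => u ⬝ᵥ v) htop
        simp only [dotProduct_add, dotProduct_zero] at h1
        have h2 : u ⬝ᵥ ((subA A D)ᵀ *ᵥ w) = 0 := by
          rw [dotProduct_mulVec, vecMul_transpose, hAu, zero_dotProduct]
        linarith
      have hQu : Q *ᵥ u = 0 := by
        have := (hQ.dotProduct_mulVec_zero_iff u).mp (by simpa using hquad0)
        exact this
      have hAtw : (subA A D)ᵀ *ᵥ w = 0 := by
        rw [hQu, zero_add] at htop
        exact htop
      -- w = 0 from independence
      have hw0 : ∀ i : D, w i = 0 := by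
        set w' : Fin m → ℝ := fun i => if h : i ∈ D then w ⟨i, h⟩ else 0 with hw'
        have hsum0 : ∑ i ∈ D, w' i • A i = 0 := by
          funext j
          have h1 := congrFun hAtw j
          simp only [Matrix.mulVec, Matrix.transpose_apply, subA, Matrix.of_apply,
            dotProduct, Pi.zero_apply] at h1
          simp only [Finset.sum_apply, Pi.smul_apply, smul_eq_mul, Pi.zero_apply]
          rw [← Finset.sum_coe_sort D (fun i => w' i * A i j)]
          rw [← h1]
          exact Finset.sum_congr rfl fun i _ => by
            simp only [hw', dif_pos i.2]; ring
        intro i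
        have := hindep w' hsum0 i.1 i.2
        simpa [hw', dif_pos i.2] using this
      -- u = 0 from the singleton property
      have hu0 : u = 0 := by
        have hmem : xb + u ∈ argminD Q A D cb (restr bb D) := by
          constructor
          · intro i
            rw [dotProduct_add, hbot i, add_zero]
            exact le_of_eq (hactD i.1 i.2)
          · intro y hy
            have hexp := obj_add hQ cb xb u
            have hg0 : (Q *ᵥ xb + cb) ⬝ᵥ u = 0 := by
              rw [hgdot]
              rw [Finset.sum_eq_zero fun i hi => by
                rw [hbot ⟨i, hi⟩, mul_zero]]
              simp
            rw [hexp, hg0, hquad0]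
            simpa using hxD.2 y hy
        rw [hsing, Set.mem_singleton_iff] at hmem
        have := congrArg (fun v => v - xb) hmem
        simpa using this
      funext i
      cases i with
      | inl j => exact congrFun hu0 j
      | inr i => exact hw0 i
    intro z1 z2 h12
    have h0 : (MD Q A D) *ᵥ (z1 - z2) = 0 := by
      rw [Matrix.mulVec_sub, h12, sub_self]
    have := hker _ h0
    exact sub_eq_zero.mp this
  · -- nonsingular → singleton
    intro hunit
    have hinj := Matrix.mulVec_injective_iff_isUnit.mpr hunit
    ext y
    simp only [Set.mem_singleton_iff]
    constructor
    · intro hy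
      have hval : obj Q cb y = obj Q cb xb :=
        le_antisymm (hy.2 xb hxD.1) (hxD.2 y hy.1)
      have hexp := obj_add hQ cb xb (y - xb)
      rw [add_sub_cancel] at hexp
      have hsum : ∀ i ∈ D, A i ⬝ᵥ (y - xb) ≤ 0 := by
        intro i hi
        have h1 := hy.1 ⟨i, hi⟩
        have h2 := hactD i hi
        rw [dotProduct_sub]
        simp only [restr] at h1
        linarith
      have hterms : ∑ i ∈ D, lam i * (A i ⬝ᵥ (y - xb)) ≤ 0 :=
        Finset.sum_nonpos fun i hi =>
          mul_nonpos_of_nonneg_of_nonpos (hlam0 i) (hsum i hi)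
      have hq := quad_nonneg hQ (y - xb)
      have hgd := hgdot (y - xb)
      -- from optimality values: grad term and quadratic term both vanish
      have hzero : (Q *ᵥ xb + cb) ⬝ᵥ (y - xb) = 0 ∧ (y - xb) ⬝ᵥ Q *ᵥ (y - xb) = 0 := by
        constructor <;> nlinarith [hexp, hval]
      have hQu : Q *ᵥ (y - xb) = 0 :=
        (hQ.dotProduct_mulVec_zero_iff (y - xb)).mp (by simpa using hzero.2)
      have hsum0 : ∑ i ∈ D, lam i * (A i ⬝ᵥ (y - xb)) = 0 := by
        rw [hgd] at hzero
        linarith [hzero.1]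
      have heach : ∀ i ∈ D, A i ⬝ᵥ (y - xb) = 0 := by
        intro i hi
        have h1 := (Finset.sum_eq_zero_iff_of_nonpos fun i hi =>
          mul_nonpos_of_nonneg_of_nonpos (hlam0 i) (hsum i hi)).mp hsum0 i hi
        have h2 := hlam_pos i hi
        by_contra hne
        have h3 : A i ⬝ᵥ (y - xb) < 0 := lt_of_le_of_ne (hsum i hi) hne
        nlinarith
      have hkerMD : (MD Q A D) *ᵥ (Sum.elim (y - xb) 0) = 0 := by
        rw [MD, fromBlocks_mulVec]
        simp only [Sum.elim_comp_inl, Sum.elim_comp_inr]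
        have h1 : (subA A D) *ᵥ (y - xb) = 0 := funext fun i => heach i.1 i.2
        rw [h1, hQu]
        simp
      have h0 : (MD Q A D) *ᵥ (Sum.elim (y - xb) 0) = (MD Q A D) *ᵥ 0 := by
        rw [hkerMD, Matrix.mulVec_zero]
      have h1 := hinj h0
      have h2 : y - xb = 0 := funext fun j => congrFun h1 (Sum.inl j)
      exact sub_eq_zero.mp h2
    · rintro rfl
      exact hxD
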